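/- Let p ∈ [1,∞) and let Λ = (λ_n) be a lacunary sequence of positive reals. With weights w_n = λ_n^{-1} and μ equal to Lebesgue measure on [0,1], the sequence D_n(p) = (λ_n^{1/p} ∫_0^1 t^{λ_n} (Σ_k λ_k^{1/p} t^{λ_k})^{p-1} dt)^{1/p} is bounded. Consequently, there exists a constant C (depending on p and Λ) such that for every finitely supported sequence b, ‖Σ_n b_n t^{λ_n}‖_{L^p([0,1])} ≤ C (Σ_n |b_n|^p / λ_n)^{1/p}. -/

import Mathlib

open MeasureTheory Set
open Finset intervalIntegral


private lemma geom_aux {y : ℝ} (h0 : 0 ≤ y) (h1 : y < 1) (k : ℕ) :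
    ∑ j ∈ Finset.range k, y ^ j ≤ 1 / (1 - y) := by
  have hy : 0 < 1 - y := by linarith
  rw [le_div_iff₀ hy]
  have h2 := geom_sum_mul y k
  have h3 : (0:ℝ) ≤ y ^ k := pow_nonneg h0 k
  nlinarith [h2]

private lemma lac_pow {r : ℝ} {lam : ℕ → ℝ} (hr : 1 < r) (hpos : ∀ n, 0 < lam n)
    (hlac : ∀ n, r * lam n ≤ lam (n+1)) : ∀ n k, r ^ k * lam n ≤ lam (n + k) := by
  intro n k
  induction k with
  | zero => simp
  | succ k ih =>
      have h1 := hlac (n + k)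
      have hr0 : (0:ℝ) ≤ r := by linarith
      calc r ^ (k+1) * lam n = r * (r ^ k * lam n) := by ring
        _ ≤ r * lam (n + k) := mul_le_mul_of_nonneg_left ih hr0
        _ ≤ lam (n + k + 1) := h1

private lemma sum_bound {r : ℝ} (hr : 1 < r) {lam : ℕ → ℝ} (hpos : ∀ n, 0 < lam n)
    (hlac : ∀ n, r * lam n ≤ lam (n+1)) {α : ℝ} (hα0 : 0 < α) (hα1 : α ≤ 1) :
    ∃ B : ℝ, 1 ≤ B ∧ ∀ s : ℝ, 0 < s → ∀ F : Finset ℕ,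
      ∑ n ∈ F, (lam n * s) ^ α * Real.exp (-(lam n * s)) ≤ B := by
  have hr0 : (0:ℝ) < r := by linarith
  have hz0 : 0 < r⁻¹ := by positivity
  have hz1 : r⁻¹ < 1 := by rw [inv_lt_one_iff₀]; right; exact hr
  set y : ℝ := r⁻¹ ^ α with hy_def
  have hy0 : 0 < y := Real.rpow_pos_of_pos hz0 α
  have hy1 : y < 1 := Real.rpow_lt_one hz0.le hz1 hα0
  refine ⟨1 / (1 - y) + 4 / (1 - r⁻¹), ?_, ?_⟩
  · have h1 : (1:ℝ) ≤ 1 / (1 - y) := by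
      rw [le_div_iff₀ (by linarith)]; linarith
    have h2 : (0:ℝ) ≤ 4 / (1 - r⁻¹) := div_nonneg (by norm_num) (by linarith)
    linarith
  intro s hs F
  have husp : ∀ n, 0 < lam n * s := fun n => mul_pos (hpos n) hs
  rw [← Finset.sum_filter_add_sum_filter_not F (fun n => lam n * s ≤ 1)]
  have part1 : ∑ n ∈ F.filter (fun n => lam n * s ≤ 1),
      (lam n * s) ^ α * Real.exp (-(lam n * s)) ≤ 1 / (1 - y) := by
    set F1 := F.filter (fun n => lam n * s ≤ 1) with hF1
    rcases F1.eq_empty_or_nonempty with he | hne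
    · rw [he, Finset.sum_empty]
      exact div_nonneg (by norm_num) (by linarith)
    · set m := F1.max' hne with hm
      have hmmem : m ∈ F1 := F1.max'_mem hne
      have hmle : lam m * s ≤ 1 := (Finset.mem_filter.mp hmmem).2
      have key : ∀ n ∈ F1, (lam n * s) ^ α * Real.exp (-(lam n * s)) ≤ y ^ (m - n) := by
        intro n hn
        have hnm : n ≤ m := F1.le_max' n hn
        have hg : r ^ (m - n) * lam n ≤ lam m := by
          have := lac_pow hr hpos hlac n (m - n)
          rwa [Nat.add_sub_cancel' hnm] at this
        have hub : lam n * s ≤ r⁻¹ ^ (m - n) := by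
          have hrk : (0:ℝ) < r ^ (m - n) := pow_pos hr0 _
          rw [inv_pow, ← one_div, le_div_iff₀ hrk]
          calc lam n * s * r ^ (m - n) = (r ^ (m - n) * lam n) * s := by ring
            _ ≤ lam m * s := mul_le_mul_of_nonneg_right hg hs.le
            _ ≤ 1 := hmle
        have h1 : (lam n * s) ^ α ≤ (r⁻¹ ^ (m - n) : ℝ) ^ α :=
          Real.rpow_le_rpow (husp n).le hub hα0.le
        have h2 : ((r⁻¹ ^ (m - n) : ℝ)) ^ α = y ^ (m - n) := by
          rw [← Real.rpow_natCast r⁻¹ (m - n), ← Real.rpow_natCast y (m - n), hy_def,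
            ← Real.rpow_mul hz0.le, ← Real.rpow_mul hz0.le, mul_comm]
        have h3 : Real.exp (-(lam n * s)) ≤ 1 := by
          rw [Real.exp_le_one_iff]; linarith [husp n]
        calc (lam n * s) ^ α * Real.exp (-(lam n * s))
            ≤ (lam n * s) ^ α * 1 :=
              mul_le_mul_of_nonneg_left h3 (Real.rpow_nonneg (husp n).le α)
          _ = (lam n * s) ^ α := mul_one _
          _ ≤ y ^ (m - n) := by rw [← h2]; exact h1
      calc ∑ n ∈ F1, (lam n * s) ^ α * Real.exp (-(lam n * s))
          ≤ ∑ n ∈ F1, y ^ (m - n) := Finset.sum_le_sum key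
        _ ≤ ∑ n ∈ Finset.range (m + 1), y ^ (m - n) := by
            apply Finset.sum_le_sum_of_subset_of_nonneg
            · intro n hn
              exact Finset.mem_range.mpr (Nat.lt_succ_of_le (F1.le_max' n hn))
            · intro n _ _
              exact pow_nonneg hy0.le _
        _ = ∑ j ∈ Finset.range (m + 1), y ^ j := by
            rw [← Finset.sum_range_reflect (fun j => y ^ j) (m+1)]
            simp
        _ ≤ 1 / (1 - y) := geom_aux hy0.le hy1 _
  have part2 : ∑ n ∈ F.filter (fun n => ¬ (lam n * s ≤ 1)),
      (lam n * s) ^ α * Real.exp (-(lam n * s)) ≤ 4 / (1 - r⁻¹) := by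
    set F2 := F.filter (fun n => ¬ (lam n * s ≤ 1)) with hF2
    rcases F2.eq_empty_or_nonempty with he | hne
    · rw [he, Finset.sum_empty]
      exact div_nonneg (by norm_num) (by linarith)
    · set m := F2.min' hne with hm
      set N := F2.max' hne with hN
      have hmmem : m ∈ F2 := F2.min'_mem hne
      have hmgt : 1 < lam m * s := by
        have := (Finset.mem_filter.mp hmmem).2
        push_neg at this; exact this
      have key : ∀ n ∈ F2, (lam n * s) ^ α * Real.exp (-(lam n * s))
          ≤ 4 * r⁻¹ ^ (n - m) := by
        intro n hn
        have hmn : m ≤ n := F2.min'_le n hn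
        have hgt : 1 < lam n * s := by
          have := (Finset.mem_filter.mp hn).2; push_neg at this; exact this
        set u := lam n * s with hu
        have hu0 : 0 < u := husp n
        have hlb : (r : ℝ) ^ (n - m) ≤ u := by
          have hg : r ^ (n - m) * lam m ≤ lam n := by
            have := lac_pow hr hpos hlac m (n - m)
            rwa [Nat.add_sub_cancel' hmn] at this
          calc (r:ℝ) ^ (n - m) = r ^ (n - m) * 1 := by ring
            _ ≤ r ^ (n - m) * (lam m * s) :=
                mul_le_mul_of_nonneg_left hmgt.le (pow_pos hr0 _).le
            _ = (r ^ (n - m) * lam m) * s := by ring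
            _ ≤ lam n * s := mul_le_mul_of_nonneg_right hg hs.le
        have h1 : u ^ α ≤ u := by
          calc u ^ α ≤ u ^ (1:ℝ) :=
              Real.rpow_le_rpow_of_exponent_le (by linarith) hα1
            _ = u := Real.rpow_one u
        have h2 : Real.exp (-u) ≤ 4 / u ^ 2 := by
          have hexp : u ^ 2 / 4 ≤ Real.exp u := by
            have h3 := Real.add_one_le_exp (u / 2)
            have h4 : Real.exp u = Real.exp (u/2) * Real.exp (u/2) := by
              rw [← Real.exp_add]; ring_nf
            nlinarith [Real.exp_pos (u/2)]
          have h5 : (0:ℝ) < u ^ 2 / 4 := by positivity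
          rw [Real.exp_neg]
          calc (Real.exp u)⁻¹ ≤ (u ^ 2 / 4)⁻¹ := by
                apply inv_anti₀ h5 hexp
            _ = 4 / u ^ 2 := by rw [inv_div]
        have h6 : u ^ α * Real.exp (-u) ≤ u * (4 / u ^ 2) :=
          mul_le_mul h1 h2 (Real.exp_pos _).le hu0.le
        have h7 : u * (4 / u ^ 2) = 4 / u := by
          field_simp
        have h8 : 4 / u ≤ 4 * r⁻¹ ^ (n - m) := by
          have hrk : (0:ℝ) < r ^ (n - m) := pow_pos hr0 _
          calc 4 / u ≤ 4 / r ^ (n - m) :=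
              div_le_div_of_nonneg_left (by norm_num) hrk hlb
            _ = 4 * r⁻¹ ^ (n - m) := by rw [inv_pow]; ring
        calc u ^ α * Real.exp (-u) ≤ u * (4 / u ^ 2) := h6
          _ = 4 / u := h7
          _ ≤ 4 * r⁻¹ ^ (n - m) := h8
      calc ∑ n ∈ F2, (lam n * s) ^ α * Real.exp (-(lam n * s))
          ≤ ∑ n ∈ F2, 4 * r⁻¹ ^ (n - m) := Finset.sum_le_sum key
        _ ≤ ∑ n ∈ Finset.Ico m (N + 1), 4 * r⁻¹ ^ (n - m) := by
            apply Finset.sum_le_sum_of_subset_of_nonneg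
            · intro n hn
              exact Finset.mem_Ico.mpr ⟨F2.min'_le n hn,
                Nat.lt_succ_of_le (F2.le_max' n hn)⟩
            · intro n _ _
              positivity
        _ = ∑ i ∈ Finset.range (N + 1 - m), 4 * r⁻¹ ^ (m + i - m) :=
            Finset.sum_Ico_eq_sum_range _ _ _
        _ = ∑ i ∈ Finset.range (N + 1 - m), 4 * r⁻¹ ^ i := by
            apply Finset.sum_congr rfl
            intro i _
            congr 2
            omega
        _ = 4 * ∑ i ∈ Finset.range (N + 1 - m), r⁻¹ ^ i := by
            rw [Finset.mul_sum]
        _ ≤ 4 * (1 / (1 - r⁻¹)) :=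
            mul_le_mul_of_nonneg_left (geom_aux hz0.le hz1 _) (by norm_num)
        _ = 4 / (1 - r⁻¹) := by ring
  exact add_le_add part1 part2


private lemma oneSub_integrable {β : ℝ} (hβ0 : 0 ≤ β) (hβ1 : β < 1) :
    IntervalIntegrable (fun t : ℝ => (1 - t) ^ (-β)) volume 0 1 := by
  have h1 : IntervalIntegrable (fun u : ℝ => u ^ (-β)) volume 0 1 :=
    intervalIntegral.intervalIntegrable_rpow' (by linarith)
  have h2 := h1.comp_sub_left 1
  simpa using h2.symm

private lemma beta_integrable {β : ℝ} (hβ0 : 0 ≤ β) (hβ1 : β < 1) {l : ℝ} (hl : 0 < l) :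
    IntegrableOn (fun t : ℝ => t ^ l * (1 - t) ^ (-β)) (Icc (0:ℝ) 1) := by
  have hg : IntegrableOn (fun t : ℝ => (1 - t) ^ (-β)) (Icc (0:ℝ) 1) := by
    have := oneSub_integrable hβ0 hβ1
    rwa [intervalIntegrable_iff_integrableOn_Icc_of_le zero_le_one] at this
  apply MeasureTheory.Integrable.mono hg
  · exact Measurable.aestronglyMeasurable (by fun_prop)
  · filter_upwards [ae_restrict_mem measurableSet_Icc] with t ht
    have ht0 : (0:ℝ) ≤ t := ht.1
    have ht1 : t ≤ 1 := ht.2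
    have h1 : (0:ℝ) ≤ t ^ l := Real.rpow_nonneg ht0 l
    have h2 : (0:ℝ) ≤ (1 - t) ^ (-β) := Real.rpow_nonneg (by linarith) _
    have h3 : t ^ l ≤ 1 := Real.rpow_le_one ht0 ht1 hl.le
    rw [Real.norm_eq_abs, Real.norm_eq_abs, abs_of_nonneg (mul_nonneg h1 h2),
      abs_of_nonneg h2]
    calc t ^ l * (1 - t) ^ (-β) ≤ 1 * (1 - t) ^ (-β) :=
        mul_le_mul_of_nonneg_right h3 h2
      _ = (1 - t) ^ (-β) := one_mul _

private lemma rpow_int_val {β : ℝ} (hβ1 : β < 1) {T : ℝ} (hT : 0 ≤ T) :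
    ∫ t in T..1, (1 - t) ^ (-β) = (1 - T) ^ (1 - β) / (1 - β) := by
  have h1 : (∫ t in T..1, (1 - t) ^ (-β)) = ∫ u in ((1:ℝ) - 1)..((1:ℝ) - T), u ^ (-β) :=
    intervalIntegral.integral_comp_sub_left (fun u => u ^ (-β)) 1
  rw [h1]
  norm_num
  rw [integral_rpow (Or.inl (by linarith))]
  rw [Real.zero_rpow (by linarith : -β + 1 ≠ 0)]
  ring_nf

private lemma pow_int_val {l : ℝ} (hl : 0 < l) :
    ∫ t in (0:ℝ)..1, t ^ l = 1 / (l + 1) := by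
  rw [integral_rpow (Or.inl (by linarith))]
  rw [Real.one_rpow, Real.zero_rpow (by linarith : l + 1 ≠ 0)]
  ring

private lemma beta_value {β : ℝ} (hβ0 : 0 ≤ β) (hβ1 : β < 1) {l : ℝ} (hl : 0 < l) :
    ∫ t in Icc (0:ℝ) 1, t ^ l * (1 - t) ^ (-β) ≤ (1 + 1/(1-β)) * l ^ (β - 1) := by
  have hint := beta_integrable hβ0 hβ1 hl
  have hII : IntervalIntegrable (fun t : ℝ => t ^ l * (1 - t) ^ (-β)) volume 0 1 := by
    rwa [intervalIntegrable_iff_integrableOn_Icc_of_le zero_le_one]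
  have hconv : (∫ t in Icc (0:ℝ) 1, t ^ l * (1 - t) ^ (-β))
      = ∫ t in (0:ℝ)..1, t ^ l * (1 - t) ^ (-β) := by
    rw [MeasureTheory.integral_Icc_eq_integral_Ioc,
      intervalIntegral.integral_of_le zero_le_one]
  rw [hconv]
  have hpow_cont : ∀ a b : ℝ, 0 ≤ a →
      IntervalIntegrable (fun t : ℝ => t ^ l) volume a b := by
    intro a b ha
    apply ContinuousOn.intervalIntegrable
    intro x hx
    apply ContinuousAt.continuousWithinAt
    apply Real.continuousAt_rpow_const
    right; exact hl.le
  rcases le_or_gt 1 l with hl1 | hl1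
  · -- l ≥ 1 : split at T = 1 - 1/l
    set T : ℝ := 1 - 1/l with hT_def
    have hl0 : (0:ℝ) < 1/l := by positivity
    have hl_le : 1/l ≤ 1 := by
      rw [div_le_one hl]; exact hl1
    have hT0 : 0 ≤ T := by rw [hT_def]; linarith
    have hT1 : T ≤ 1 := by rw [hT_def]; linarith
    have hsub1 : Set.uIcc (0:ℝ) T ⊆ Set.uIcc (0:ℝ) 1 := by
      rw [Set.uIcc_of_le hT0, Set.uIcc_of_le zero_le_one]
      exact Set.Icc_subset_Icc le_rfl hT1
    have hsub2 : Set.uIcc T 1 ⊆ Set.uIcc (0:ℝ) 1 := by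
      rw [Set.uIcc_of_le hT1, Set.uIcc_of_le zero_le_one]
      exact Set.Icc_subset_Icc hT0 le_rfl
    have hsplit := intervalIntegral.integral_add_adjacent_intervals
      (hII.mono_set hsub1) (hII.mono_set hsub2)
    rw [← hsplit]
    have hlb : (0:ℝ) < l ^ β := Real.rpow_pos_of_pos hl β
    have piece1 : (∫ t in (0:ℝ)..T, t ^ l * (1 - t) ^ (-β)) ≤ l ^ (β - 1) := by
      have hmono : ∀ x ∈ Icc (0:ℝ) T, x ^ l * (1 - x) ^ (-β) ≤ x ^ l * l ^ β := by
        intro x hx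
        have hx0 : (0:ℝ) ≤ x := hx.1
        have hx1 : x ≤ T := hx.2
        have hx1' : x ≤ 1 - 1/l := by rwa [hT_def] at hx1
        have h1x : 1/l ≤ 1 - x := by linarith
        have h2 : (1 - x) ^ (-β) ≤ (1/l) ^ (-β) :=
          Real.rpow_le_rpow_of_nonpos hl0 h1x (by linarith)
        have h3 : ((1:ℝ)/l) ^ (-β) = l ^ β := by
          rw [one_div, Real.inv_rpow hl.le, Real.rpow_neg hl.le, inv_inv]
        rw [h3] at h2
        exact mul_le_mul_of_nonneg_left h2 (Real.rpow_nonneg hx0 l)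
      calc (∫ t in (0:ℝ)..T, t ^ l * (1 - t) ^ (-β))
          ≤ ∫ t in (0:ℝ)..T, t ^ l * l ^ β := by
            apply intervalIntegral.integral_mono_on hT0 (hII.mono_set hsub1)
              (((hpow_cont 0 T le_rfl).mul_const _)) hmono
        _ = (∫ t in (0:ℝ)..T, t ^ l) * l ^ β := by
            rw [← intervalIntegral.integral_mul_const]
        _ ≤ (∫ t in (0:ℝ)..1, t ^ l) * l ^ β := by
            apply mul_le_mul_of_nonneg_right _ hlb.le
            apply intervalIntegral.integral_mono_interval le_rfl hT0 hT1
            · filter_upwards [ae_restrict_mem measurableSet_Ioc] with x hx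
              exact Real.rpow_nonneg hx.1.le l
            · exact hpow_cont 0 1 le_rfl
        _ = 1 / (l + 1) * l ^ β := by rw [pow_int_val hl]
        _ ≤ 1 / l * l ^ β := by
            apply mul_le_mul_of_nonneg_right _ hlb.le
            apply div_le_div_of_nonneg_left one_pos.le hl
            linarith
        _ = l ^ (β - 1) := by
            rw [Real.rpow_sub hl, Real.rpow_one]
            ring
    have piece2 : (∫ t in T..1, t ^ l * (1 - t) ^ (-β)) ≤ l ^ (β - 1) / (1 - β) := by
      have hmono : ∀ x ∈ Icc T 1, x ^ l * (1 - x) ^ (-β) ≤ (1 - x) ^ (-β) := by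
        intro x hx
        have hx0 : (0:ℝ) ≤ x := le_trans hT0 hx.1
        have h2 : (0:ℝ) ≤ (1 - x) ^ (-β) := Real.rpow_nonneg (by linarith [hx.2]) _
        calc x ^ l * (1 - x) ^ (-β) ≤ 1 * (1 - x) ^ (-β) :=
            mul_le_mul_of_nonneg_right (Real.rpow_le_one hx0 hx.2 hl.le) h2
          _ = (1 - x) ^ (-β) := one_mul _
      calc (∫ t in T..1, t ^ l * (1 - t) ^ (-β))
          ≤ ∫ t in T..1, (1 - t) ^ (-β) := by
            apply intervalIntegral.integral_mono_on hT1 (hII.mono_set hsub2)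
              ((oneSub_integrable hβ0 hβ1).mono_set hsub2) hmono
        _ = (1 - T) ^ (1 - β) / (1 - β) := rpow_int_val hβ1 hT0
        _ = l ^ (β - 1) / (1 - β) := by
            have : (1:ℝ) - T = 1/l := by rw [hT_def]; ring
            rw [this, one_div, Real.inv_rpow hl.le, ← Real.rpow_neg hl.le]
            ring_nf
    have hne : (1:ℝ) - β ≠ 0 := by linarith
    have hfin : l ^ (β - 1) + l ^ (β - 1) / (1 - β) = (1 + 1/(1-β)) * l ^ (β - 1) := by
      field_simp
    linarith [piece1, piece2]
  · -- l < 1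
    have hlpow : (1:ℝ) ≤ l ^ (β - 1) :=
      Real.one_le_rpow_of_pos_of_le_one_of_nonpos hl hl1.le (by linarith)
    have h1 : (∫ t in (0:ℝ)..1, t ^ l * (1 - t) ^ (-β))
        ≤ ∫ t in (0:ℝ)..1, (1 - t) ^ (-β) := by
      apply intervalIntegral.integral_mono_on zero_le_one hII (oneSub_integrable hβ0 hβ1)
      intro x hx
      have h2 : (0:ℝ) ≤ (1 - x) ^ (-β) := Real.rpow_nonneg (by linarith [hx.2]) _
      calc x ^ l * (1 - x) ^ (-β) ≤ 1 * (1 - x) ^ (-β) :=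
          mul_le_mul_of_nonneg_right (Real.rpow_le_one hx.1 hx.2 hl.le) h2
        _ = (1 - x) ^ (-β) := one_mul _
    have h2 : (∫ t in (0:ℝ)..1, (1 - t) ^ (-β)) = 1 / (1 - β) := by
      have := rpow_int_val hβ1 (le_refl (0:ℝ))
      rw [this]
      simp
    have h3 : (0:ℝ) < 1/(1-β) := div_pos one_pos (by linarith)
    have h4 : 1/(1-β) ≤ (1 + 1/(1-β)) * l ^ (β - 1) := by
      nlinarith
    linarith


private lemma rpow_eq_exp_pos {t : ℝ} (ht0 : 0 < t) (l : ℝ) :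
    t ^ l = Real.exp (-(l * (-Real.log t))) := by
  rw [Real.rpow_def_of_pos ht0]
  ring_nf

private lemma tsum_bound {p : ℝ} (hp : 1 ≤ p) {lam : ℕ → ℝ}
    (hpos : ∀ n, 0 < lam n) {B : ℝ} (hB1 : 1 ≤ B)
    (hB : ∀ s : ℝ, 0 < s → ∀ F : Finset ℕ,
      ∑ n ∈ F, (lam n * s) ^ (1/p) * Real.exp (-(lam n * s)) ≤ B)
    {t : ℝ} (ht0 : 0 < t) (ht1 : t < 1) :
    (∑' k, (lam k) ^ (1/p) * t ^ lam k) ≤ B * (1 - t) ^ (-(1/p)) := by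
  have hp0 : (0:ℝ) < p := lt_of_lt_of_le one_pos hp
  set s : ℝ := -Real.log t with hs_def
  have hs : 0 < s := by
    have := Real.log_neg ht0 ht1
    simp only [hs_def]; linarith
  have hst : 1 - t ≤ s := by
    have := Real.log_le_sub_one_of_pos ht0
    simp only [hs_def]; linarith
  have hsum_eq : ∀ F : Finset ℕ, ∑ k ∈ F, (lam k) ^ (1/p) * t ^ lam k
      = s ^ (-(1/p)) * ∑ k ∈ F, (lam k * s) ^ (1/p) * Real.exp (-(lam k * s)) := by
    intro F
    rw [Finset.mul_sum]
    apply Finset.sum_congr rfl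
    intro k _
    have hss : s ^ (-(1/p)) * s ^ (1/p) = 1 := by
      rw [← Real.rpow_add hs]
      norm_num
    rw [rpow_eq_exp_pos ht0 (lam k), Real.mul_rpow (hpos k).le hs.le, ← hs_def]
    rw [show s ^ (-(1/p)) * ((lam k) ^ (1/p) * s ^ (1/p) * Real.exp (-(lam k * s)))
        = (s ^ (-(1/p)) * s ^ (1/p)) * ((lam k) ^ (1/p) * Real.exp (-(lam k * s))) from by ring,
      hss, one_mul]
  have hc : 0 ≤ s ^ (-(1/p)) * B :=
    mul_nonneg (Real.rpow_nonneg hs.le _) (by linarith)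
  have hbound : ∀ F : Finset ℕ, ∑ k ∈ F, (lam k) ^ (1/p) * t ^ lam k
      ≤ s ^ (-(1/p)) * B := by
    intro F
    rw [hsum_eq F]
    exact mul_le_mul_of_nonneg_left (hB s hs F) (Real.rpow_nonneg hs.le _)
  have htsum := tsum_le_of_sum_le' (L := SummationFilter.unconditional ℕ) hc hbound
  apply le_trans htsum
  have h1 : s ^ (-(1/p)) ≤ (1 - t) ^ (-(1/p)) :=
    Real.rpow_le_rpow_of_nonpos (by linarith) hst (neg_nonpos.mpr (by positivity))
  calc s ^ (-(1/p)) * B ≤ (1 - t) ^ (-(1/p)) * B :=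
      mul_le_mul_of_nonneg_right h1 (by linarith)
    _ = B * (1 - t) ^ (-(1/p)) := mul_comm _ _
private lemma holder_term_eq {p X e a : ℝ} (hp0 : 0 < p) (hX : 0 < X) (he : 0 < e)
    (ha : 0 ≤ a) :
    (X ^ (1/p) * e) * (a * e / (X ^ (1/p) * e)) ^ p = a ^ p * (X ^ (1/p - 1) * e) := by
  have hXp : 0 < X ^ ((1:ℝ)/p) := Real.rpow_pos_of_pos hX _
  have h1 : (a * e / (X ^ (1/p) * e)) = a / X ^ (1/p) := by
    field_simp
  rw [h1, Real.div_rpow ha hXp.le, ← Real.rpow_mul hX.le,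
    show 1/p * p = 1 from by field_simp, Real.rpow_one,
    Real.rpow_sub hX, Real.rpow_one]
  field_simp

theorem stmt4 (p r : ℝ) (hp : 1 ≤ p) (hr : 1 < r)
    (lam : ℕ → ℝ) (hpos : ∀ n, 0 < lam n)
    (hlac : ∀ n, r * lam n ≤ lam (n+1)) :
    (∃ M : ℝ, ∀ n : ℕ,
        ((lam n) ^ (1/p) * ∫ t in Set.Icc (0:ℝ) 1,
            t ^ lam n * (∑' k, (lam k) ^ (1/p) * t ^ lam k) ^ (p-1)) ^ (1/p) ≤ M) ∧
    ∃ C : ℝ, 0 < C ∧ ∀ b : ℕ →₀ ℝ,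
      (∫ t in Set.Icc (0:ℝ) 1, |∑ n ∈ b.support, b n * t ^ lam n| ^ p) ^ (1/p)
        ≤ C * (∑ n ∈ b.support, |b n| ^ p / lam n) ^ (1/p) := by
  have hp0 : (0:ℝ) < p := lt_of_lt_of_le one_pos hp
  have hq0 : (0:ℝ) < 1/p := by positivity
  have hq1 : 1/p ≤ 1 := by rw [div_le_one hp0]; exact hp
  set β : ℝ := 1 - 1/p with hβ_def
  have hβ0 : 0 ≤ β := by simp only [hβ_def]; linarith
  have hβ1 : β < 1 := by simp only [hβ_def]; linarith
  obtain ⟨B, hB1, hB⟩ := sum_bound hr hpos hlac hq0 hq1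
  have hB0 : (0:ℝ) < B := lt_of_lt_of_le one_pos hB1
  set C0 : ℝ := 1 + 1/(1-β) with hC0_def
  have hC0 : 0 < C0 := by
    have h : 0 < 1/(1-β) := div_pos one_pos (by linarith)
    simp only [hC0_def]; linarith
  set K : ℝ := B ^ (p-1) * C0 with hK_def
  have hBp : 0 < B ^ (p-1) := Real.rpow_pos_of_pos hB0 _
  have hK : 0 < K := mul_pos hBp hC0
  have hae : ∀ᵐ t ∂(volume.restrict (Icc (0:ℝ) 1)), t ∈ Ioo (0:ℝ) 1 := by
    have hfin : volume ({0,1} : Set ℝ) = 0 := by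
      have h : ({0,1} : Set ℝ).Finite := (Set.finite_singleton 1).insert 0
      exact h.measure_zero _
    have h1 : ∀ᵐ (t:ℝ) ∂volume, t ∉ ({0,1} : Set ℝ) :=
      MeasureTheory.compl_mem_ae_iff.mpr hfin
    filter_upwards [ae_restrict_mem measurableSet_Icc, ae_restrict_of_ae h1] with t ht h2
    simp only [Set.mem_insert_iff, Set.mem_singleton_iff, not_or] at h2
    exact ⟨lt_of_le_of_ne ht.1 (Ne.symm h2.1), lt_of_le_of_ne ht.2 h2.2⟩
  constructor
  · -- boundedness of D_n
    refine ⟨K ^ (1/p), fun n => ?_⟩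
    have hf_nonneg : ∀ t ∈ Icc (0:ℝ) 1,
        0 ≤ t ^ lam n * (∑' k, (lam k) ^ (1/p) * t ^ lam k) ^ (p-1) := by
      intro t ht
      have hS0 : 0 ≤ ∑' k, (lam k) ^ (1/p) * t ^ lam k :=
        tsum_nonneg fun k => mul_nonneg (Real.rpow_nonneg (hpos k).le _)
          (Real.rpow_nonneg ht.1 _)
      exact mul_nonneg (Real.rpow_nonneg ht.1 _) (Real.rpow_nonneg hS0 _)
    have hint : (∫ t in Icc (0:ℝ) 1, t ^ lam n * (∑' k, (lam k) ^ (1/p) * t ^ lam k) ^ (p-1))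
        ≤ B ^ (p-1) * ∫ t in Icc (0:ℝ) 1, t ^ lam n * (1-t) ^ (-β) := by
      rw [← MeasureTheory.integral_const_mul]
      apply MeasureTheory.integral_mono_of_nonneg
      · filter_upwards [ae_restrict_mem measurableSet_Icc] with t ht
        exact hf_nonneg t ht
      · exact (beta_integrable hβ0 hβ1 (hpos n)).const_mul _
      · filter_upwards [hae] with t ht
        have ht0 : 0 < t := ht.1
        have ht1 : t < 1 := ht.2
        have h1t : 0 < 1 - t := by linarith
        have hS0 : 0 ≤ ∑' k, (lam k) ^ (1/p) * t ^ lam k :=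
          tsum_nonneg fun k => mul_nonneg (Real.rpow_nonneg (hpos k).le _)
            (Real.rpow_nonneg ht0.le _)
        have hS1 := tsum_bound hp hpos hB1 hB ht0 ht1
        have h2 : (∑' k, (lam k) ^ (1/p) * t ^ lam k) ^ (p-1)
            ≤ (B * (1 - t) ^ (-(1/p))) ^ (p-1) :=
          Real.rpow_le_rpow hS0 hS1 (by linarith)
        have h3 : (B * (1 - t) ^ (-(1/p))) ^ (p-1) = B ^ (p-1) * (1-t) ^ (-β) := by
          rw [Real.mul_rpow hB0.le (Real.rpow_nonneg h1t.le _),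
            ← Real.rpow_mul h1t.le]
          congr 1
          rw [hβ_def]
          field_simp
        rw [h3] at h2
        calc t ^ lam n * (∑' k, (lam k) ^ (1/p) * t ^ lam k) ^ (p-1)
            ≤ t ^ lam n * (B ^ (p-1) * (1-t) ^ (-β)) :=
              mul_le_mul_of_nonneg_left h2 (Real.rpow_nonneg ht0.le _)
          _ = B ^ (p-1) * (t ^ lam n * (1-t) ^ (-β)) := by ring
    have h5 : (∫ t in Icc (0:ℝ) 1, t ^ lam n * (∑' k, (lam k) ^ (1/p) * t ^ lam k) ^ (p-1))
        ≤ B ^ (p-1) * (C0 * (lam n) ^ (β - 1)) := by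
      apply le_trans hint
      apply mul_le_mul_of_nonneg_left _ hBp.le
      exact beta_value hβ0 hβ1 (hpos n)
    have h6 : (lam n) ^ (1/p)
          * (∫ t in Icc (0:ℝ) 1, t ^ lam n * (∑' k, (lam k) ^ (1/p) * t ^ lam k) ^ (p-1))
        ≤ K := by
      calc (lam n) ^ (1/p)
            * (∫ t in Icc (0:ℝ) 1, t ^ lam n * (∑' k, (lam k) ^ (1/p) * t ^ lam k) ^ (p-1))
          ≤ (lam n) ^ (1/p) * (B ^ (p-1) * (C0 * (lam n) ^ (β - 1))) :=
            mul_le_mul_of_nonneg_left h5 (Real.rpow_nonneg (hpos n).le _)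
        _ = ((lam n) ^ (1/p) * (lam n) ^ (β - 1)) * K := by rw [hK_def]; ring
        _ = (lam n) ^ (1/p + (β - 1)) * K := by rw [Real.rpow_add (hpos n)]
        _ = K := by
            rw [show 1/p + (β - 1) = 0 from by rw [hβ_def]; ring, Real.rpow_zero, one_mul]
    have h7 : 0 ≤ (lam n) ^ (1/p)
        * ∫ t in Icc (0:ℝ) 1, t ^ lam n * (∑' k, (lam k) ^ (1/p) * t ^ lam k) ^ (p-1) :=
      mul_nonneg (Real.rpow_nonneg (hpos n).le _)
        (MeasureTheory.setIntegral_nonneg measurableSet_Icc hf_nonneg)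
    exact Real.rpow_le_rpow h7 h6 hq0.le
  · -- the upper ℓ^p estimate
    refine ⟨K ^ (1/p), Real.rpow_pos_of_pos hK _, fun b => ?_⟩
    set T : ℝ := ∑ n ∈ b.support, |b n| ^ p / lam n with hT_def
    have hT0 : 0 ≤ T :=
      Finset.sum_nonneg fun n _ => div_nonneg (Real.rpow_nonneg (abs_nonneg _) _) (hpos n).le
    set G : ℝ → ℝ := fun t => ∑ n ∈ b.support,
      (B ^ (p-1) * (|b n| ^ p * (lam n) ^ (-β))) * (t ^ lam n * (1-t) ^ (-β)) with hG_def
    have hGint : IntegrableOn G (Icc (0:ℝ) 1) := by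
      apply MeasureTheory.integrable_finset_sum
      intro n _
      exact (beta_integrable hβ0 hβ1 (hpos n)).const_mul _
    have habs_nonneg : ∀ t : ℝ, 0 ≤ |∑ n ∈ b.support, b n * t ^ lam n| ^ p :=
      fun t => Real.rpow_nonneg (abs_nonneg _) _
    have hmain : (∫ t in Icc (0:ℝ) 1, |∑ n ∈ b.support, b n * t ^ lam n| ^ p)
        ≤ ∫ t in Icc (0:ℝ) 1, G t := by
      apply MeasureTheory.integral_mono_of_nonneg
      · exact Filter.Eventually.of_forall fun t => habs_nonneg t
      · exact hGint
      · filter_upwards [hae] with t ht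
        have ht0 : 0 < t := ht.1
        have ht1 : t < 1 := ht.2
        have h1t : 0 < 1 - t := by linarith
        set s : ℝ := -Real.log t with hs_def
        have hs : 0 < s := by
          have h := Real.log_neg ht0 ht1
          simp only [hs_def]; linarith
        have hst : 1 - t ≤ s := by
          have h := Real.log_le_sub_one_of_pos ht0
          simp only [hs_def]; linarith
        have htexp : ∀ n, t ^ lam n = Real.exp (-(lam n * s)) := by
          intro n
          rw [rpow_eq_exp_pos ht0 (lam n), hs_def]
        have htl : ∀ n : ℕ, (0:ℝ) < t ^ lam n := fun n => Real.rpow_pos_of_pos ht0 _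
        set c : ℕ → ℝ := fun n => (lam n * s) ^ (1/p) * t ^ lam n with hc_def
        have hc : ∀ n, 0 < c n := fun n =>
          mul_pos (Real.rpow_pos_of_pos (mul_pos (hpos n) hs) _) (htl n)
        set f : ℕ → ℝ := fun n => |b n| * t ^ lam n / c n with hf_def
        have hf0 : ∀ n, 0 ≤ f n := fun n =>
          div_nonneg (mul_nonneg (abs_nonneg _) (htl n).le) (hc n).le
        have hwf : ∀ n, c n * f n = |b n| * t ^ lam n := by
          intro n
          rw [hf_def]
          field_simp
          exact mul_div_cancel_left₀ _ (hc n).ne'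
        set F : ℝ := ∑ n ∈ b.support, |b n| * t ^ lam n with hF_def
        have hF0 : 0 ≤ F :=
          Finset.sum_nonneg fun n _ => mul_nonneg (abs_nonneg _) (htl n).le
        have step1 : |∑ n ∈ b.support, b n * t ^ lam n| ≤ F := by
          apply le_trans (Finset.abs_sum_le_sum_abs _ _)
          apply le_of_eq
          apply Finset.sum_congr rfl
          intro n _
          rw [abs_mul, abs_of_nonneg (htl n).le]
        have step2 : |∑ n ∈ b.support, b n * t ^ lam n| ^ p ≤ F ^ p :=
          Real.rpow_le_rpow (abs_nonneg _) step1 hp0.le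
        have hH := Real.inner_le_weight_mul_Lp_of_nonneg b.support hp c f
          (fun n => (hc n).le) hf0
        rw [show (∑ n ∈ b.support, c n * f n) = F from
          Finset.sum_congr rfl (fun n _ => hwf n)] at hH
        have hsumw_nonneg : 0 ≤ ∑ n ∈ b.support, c n :=
          Finset.sum_nonneg fun n _ => (hc n).le
        have hsumwf_nonneg : 0 ≤ ∑ n ∈ b.support, c n * f n ^ p :=
          Finset.sum_nonneg fun n _ =>
            mul_nonneg (hc n).le (Real.rpow_nonneg (hf0 n) _)
        have step3 : F ^ p ≤ (∑ n ∈ b.support, c n) ^ (p - 1)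
            * (∑ n ∈ b.support, c n * f n ^ p) := by
          have h1 := Real.rpow_le_rpow hF0 hH hp0.le
          apply le_trans h1
          rw [Real.mul_rpow (Real.rpow_nonneg hsumw_nonneg _)
              (Real.rpow_nonneg hsumwf_nonneg _),
            ← Real.rpow_mul hsumw_nonneg, ← Real.rpow_mul hsumwf_nonneg,
            show (1 - p⁻¹) * p = p - 1 from by field_simp,
            show p⁻¹ * p = 1 from inv_mul_cancel₀ hp0.ne', Real.rpow_one]
        have hsumw : (∑ n ∈ b.support, c n) ≤ B := by
          have h1 : (∑ n ∈ b.support, c n)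
              = ∑ n ∈ b.support, (lam n * s) ^ (1/p) * Real.exp (-(lam n * s)) := by
            apply Finset.sum_congr rfl
            intro n _
            rw [hc_def]
            simp only []
            rw [htexp n]
          rw [h1]
          exact hB s hs b.support
        have hterm : ∀ n ∈ b.support, c n * f n ^ p
            ≤ |b n| ^ p * ((lam n) ^ (-β) * ((1-t) ^ (-β) * t ^ lam n)) := by
          intro n _
          have hX : 0 < lam n * s := mul_pos (hpos n) hs
          have heq : c n * f n ^ p
              = |b n| ^ p * ((lam n * s) ^ (1/p - 1) * t ^ lam n) := by
            rw [hc_def, hf_def]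
            simp only []
            exact holder_term_eq hp0 hX (htl n) (abs_nonneg _)
          rw [heq]
          apply mul_le_mul_of_nonneg_left _ (Real.rpow_nonneg (abs_nonneg _) _)
          have h1 : (lam n * s) ^ (1/p - 1) = (lam n * s) ^ (-β) := by
            congr 1
            rw [hβ_def]; ring
          have h2 : (lam n * s) ^ (-β) ≤ (lam n * (1-t)) ^ (-β) :=
            Real.rpow_le_rpow_of_nonpos (mul_pos (hpos n) h1t)
              (mul_le_mul_of_nonneg_left hst (hpos n).le) (by linarith)
          have h3 : (lam n * (1-t)) ^ (-β) = (lam n) ^ (-β) * (1-t) ^ (-β) :=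
            Real.mul_rpow (hpos n).le h1t.le
          calc (lam n * s) ^ (1/p - 1) * t ^ lam n
              ≤ (lam n) ^ (-β) * (1-t) ^ (-β) * t ^ lam n := by
                apply mul_le_mul_of_nonneg_right _ (htl n).le
                rw [h1, ← h3]
                exact h2
            _ = (lam n) ^ (-β) * ((1-t) ^ (-β) * t ^ lam n) := by ring
        have step4 : (∑ n ∈ b.support, c n * f n ^ p)
            ≤ ∑ n ∈ b.support, |b n| ^ p * ((lam n) ^ (-β) * ((1-t) ^ (-β) * t ^ lam n)) :=
          Finset.sum_le_sum hterm
        have hfinal : F ^ p ≤ G t := by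
          have h1 : (∑ n ∈ b.support, c n) ^ (p-1) ≤ B ^ (p-1) :=
            Real.rpow_le_rpow hsumw_nonneg hsumw (by linarith)
          have h2 : (∑ n ∈ b.support, c n) ^ (p - 1)
              * (∑ n ∈ b.support, c n * f n ^ p)
              ≤ B ^ (p-1) * ∑ n ∈ b.support,
                  |b n| ^ p * ((lam n) ^ (-β) * ((1-t) ^ (-β) * t ^ lam n)) := by
            apply mul_le_mul h1 step4 hsumwf_nonneg hBp.le
          apply le_trans step3
          apply le_trans h2
          apply le_of_eq
          rw [hG_def]
          simp only []
          rw [Finset.mul_sum]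
          apply Finset.sum_congr rfl
          intro n _
          ring
        exact le_trans step2 hfinal
    have hGval : (∫ t in Icc (0:ℝ) 1, G t) ≤ K * T := by
      have h1 : (∫ t in Icc (0:ℝ) 1, G t)
          = ∑ n ∈ b.support, (B ^ (p-1) * (|b n| ^ p * (lam n) ^ (-β)))
              * ∫ t in Icc (0:ℝ) 1, t ^ lam n * (1-t) ^ (-β) := by
        rw [hG_def]
        rw [MeasureTheory.integral_finset_sum _
          (fun n _ => (beta_integrable hβ0 hβ1 (hpos n)).const_mul _)]
        apply Finset.sum_congr rfl
        intro n _
        exact MeasureTheory.integral_const_mul _ _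
      rw [h1, hT_def, Finset.mul_sum]
      apply Finset.sum_le_sum
      intro n _
      have hcoef : 0 ≤ B ^ (p-1) * (|b n| ^ p * (lam n) ^ (-β)) :=
        mul_nonneg hBp.le (mul_nonneg (Real.rpow_nonneg (abs_nonneg _) _)
          (Real.rpow_nonneg (hpos n).le _))
      calc (B ^ (p-1) * (|b n| ^ p * (lam n) ^ (-β)))
            * ∫ t in Icc (0:ℝ) 1, t ^ lam n * (1-t) ^ (-β)
          ≤ (B ^ (p-1) * (|b n| ^ p * (lam n) ^ (-β))) * (C0 * (lam n) ^ (β - 1)) :=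
            mul_le_mul_of_nonneg_left (beta_value hβ0 hβ1 (hpos n)) hcoef
        _ = K * (|b n| ^ p * ((lam n) ^ (-β) * (lam n) ^ (β - 1))) := by
            rw [hK_def]; ring
        _ = K * (|b n| ^ p / lam n) := by
            rw [← Real.rpow_add (hpos n), show -β + (β - 1) = -1 from by ring,
              Real.rpow_neg_one, div_eq_mul_inv]
    have hIJ : 0 ≤ ∫ t in Icc (0:ℝ) 1, |∑ n ∈ b.support, b n * t ^ lam n| ^ p :=
      MeasureTheory.setIntegral_nonneg measurableSet_Icc (fun t _ => habs_nonneg t)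
    calc (∫ t in Icc (0:ℝ) 1, |∑ n ∈ b.support, b n * t ^ lam n| ^ p) ^ (1/p)
        ≤ (K * T) ^ (1/p) :=
          Real.rpow_le_rpow hIJ (le_trans hmain hGval) hq0.le
      _ = K ^ (1/p) * T ^ (1/p) := Real.mul_rpow hK.le hT0
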